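/- Let f ∈ F_q((T^{-1})) and suppose there exist real numbers 0 < δ ≤ ρ, θ ≥ 1, positive constants c₀, c₁, c₂, and a sequence of rational functions (P_n/Q_n)_{n≥1} with P_n, Q_n ∈ F_q[T], Q_n ≠ 0, such that (i) |Q_n| < |Q_{n+1}| ≤ c₀|Q_n|^θ and (ii) c₁/|Q_n|^{1+ρ} ≤ |f − P_n/Q_n| ≤ c₂/|Q_n|^{1+δ} for all n. Then the irrationality exponent of f satisfies 1 + δ ≤ μ(f) ≤ θ(1+ρ)/δ. -/

import Mathlib

open Polynomial LaurentSeries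
open scoped Classical

/-- The absolute value `|f| = |T|^{-i₀}` on `F((T⁻¹))`, where `i₀` is the order of `f`
as a Hahn series in `T⁻¹` and `t = |T| > 1` is fixed; `|0| = 0`. -/
noncomputable def lAbs {F : Type*} [Field F] (t : ℝ) (f : LaurentSeries F) : ℝ :=
  if f = 0 then 0 else t ^ (-f.order)

/-- The image of a polynomial `P(T)` in the field of Laurent series in `T⁻¹`:
the polynomial variable `T` is sent to the inverse of the Hahn-series variable. -/
noncomputable def polyLS {F : Type*} [Field F] (P : Polynomial F) : LaurentSeries F :=
  Polynomial.aeval (HahnSeries.single (-1 : ℤ) (1 : F)) P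

section Aux
variable {F : Type*} [Field F] {t : ℝ}

lemma lAbs_zero : lAbs t (0 : LaurentSeries F) = 0 := if_pos rfl

lemma lAbs_of_ne {x : LaurentSeries F} (hx : x ≠ 0) : lAbs t x = t ^ (-x.order) := if_neg hx

lemma lAbs_nonneg (ht : 1 < t) (x : LaurentSeries F) : 0 ≤ lAbs t x := by
  unfold lAbs; split
  · exact le_refl 0
  · positivity

lemma lAbs_pos (ht : 1 < t) {x : LaurentSeries F} (hx : x ≠ 0) : 0 < lAbs t x := by
  rw [lAbs_of_ne hx]; positivity

lemma lAbs_mul (ht : 1 < t) (x y : LaurentSeries F) :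
    lAbs t (x * y) = lAbs t x * lAbs t y := by
  rcases eq_or_ne x 0 with rfl | hx
  · simp [lAbs_zero]
  rcases eq_or_ne y 0 with rfl | hy
  · simp [lAbs_zero]
  rw [lAbs_of_ne hx, lAbs_of_ne hy, lAbs_of_ne (mul_ne_zero hx hy),
    HahnSeries.order_mul hx hy, neg_add, zpow_add₀ (by positivity : (t:ℝ) ≠ 0)]

lemma lAbs_one (ht : 1 < t) : lAbs t (1 : LaurentSeries F) = 1 := by
  rw [lAbs_of_ne one_ne_zero, HahnSeries.order_one]; simp

lemma lAbs_inv (ht : 1 < t) (x : LaurentSeries F) : lAbs t x⁻¹ = (lAbs t x)⁻¹ := by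
  rcases eq_or_ne x 0 with rfl | hx
  · simp [lAbs_zero]
  have h := lAbs_mul ht x x⁻¹
  rw [mul_inv_cancel₀ hx, lAbs_one ht] at h
  exact (inv_eq_of_mul_eq_one_right h.symm).symm

lemma lAbs_div (ht : 1 < t) (x y : LaurentSeries F) :
    lAbs t (x / y) = lAbs t x / lAbs t y := by
  rw [div_eq_mul_inv, lAbs_mul ht, lAbs_inv ht, div_eq_mul_inv]

lemma lAbs_neg (x : LaurentSeries F) : lAbs t (-x) = lAbs t x := by
  unfold lAbs
  simp [HahnSeries.order_neg]

lemma lAbs_add_le (ht : 1 < t) (x y : LaurentSeries F) :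
    lAbs t (x + y) ≤ max (lAbs t x) (lAbs t y) := by
  rcases eq_or_ne x 0 with rfl | hx
  · simp
  rcases eq_or_ne y 0 with rfl | hy
  · simp
  rcases eq_or_ne (x + y) 0 with hxy | hxy
  · rw [hxy, lAbs_zero]
    exact le_max_of_le_left (lAbs_nonneg ht x)
  have h := HahnSeries.min_order_le_order_add hxy
  rw [lAbs_of_ne hx, lAbs_of_ne hy, lAbs_of_ne hxy]
  have mono : Monotone fun k : ℤ => t ^ k := fun a b hab => zpow_le_zpow_right₀ ht.le hab
  calc t ^ (-(x + y).order) ≤ t ^ (max (-x.order) (-y.order)) :=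
        mono (by omega)
    _ = max (t ^ (-x.order)) (t ^ (-y.order)) := mono.map_max

end Aux

section PolyLS
variable {F : Type*} [Field F] {t : ℝ}

lemma polyLS_coeff (P : Polynomial F) :
    (polyLS P).coeff (-(P.natDegree : ℤ)) = P.leadingCoeff := by
  unfold polyLS
  rw [Polynomial.aeval_eq_sum_range]
  have halg : ∀ c : F, algebraMap F (LaurentSeries F) c = HahnSeries.single 0 c := by
    intro c
    rw [HahnSeries.algebraMap_apply']
    simp [PowerSeries.algebraMap_apply]
  have hsmul : ∀ (c : F) (x : LaurentSeries F) (a : ℤ),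
      (@HSMul.hSMul F (LaurentSeries F) _ (@instHSMul F (LaurentSeries F) Algebra.toSMul) c x).coeff a
        = c * x.coeff a := by
    intro c x a
    rw [Algebra.smul_def, halg, HahnSeries.single_zero_mul_eq_smul, HahnSeries.coeff_smul,
      smul_eq_mul]
  have hsum : ∀ (s : Finset ℕ) (g : ℕ → LaurentSeries F) (a : ℤ),
      (∑ i ∈ s, g i).coeff a = ∑ i ∈ s, (g i).coeff a := by
    intro s g a
    classical
    induction s using Finset.induction_on with
    | empty => simp
    | insert x s hx ih => simp [Finset.sum_insert hx, ih]
  rw [hsum]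
  simp only [hsmul, HahnSeries.single_pow, one_pow, HahnSeries.coeff_single]
  refine Eq.trans (Finset.sum_congr rfl fun i hi =>
      (?_ : _ = if i = P.natDegree then P.leadingCoeff else 0)) ?_
  · rcases eq_or_ne i P.natDegree with rfl | h
    · rw [if_pos rfl, if_pos (by simp), mul_one, Polynomial.leadingCoeff]
    · rw [if_neg h, if_neg (by rw [show (i • (-1 : ℤ)) = -(i : ℤ) by simp]; omega), mul_zero]
  · rw [Finset.sum_ite_eq' (Finset.range (P.natDegree + 1)) P.natDegree fun _ => P.leadingCoeff,
      if_pos (Finset.self_mem_range_succ _)]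

lemma polyLS_ne_zero {P : Polynomial F} (hP : P ≠ 0) : polyLS P ≠ 0 := by
  intro h
  have := polyLS_coeff P
  rw [h] at this
  simp only [HahnSeries.coeff_zero] at this
  exact hP (Polynomial.leadingCoeff_eq_zero.mp this.symm)

lemma polyLS_order_le {P : Polynomial F} (hP : P ≠ 0) :
    (polyLS P).order ≤ -(P.natDegree : ℤ) :=
  HahnSeries.order_le_of_coeff_ne_zero
    (by rw [polyLS_coeff]; exact Polynomial.leadingCoeff_ne_zero.mpr hP)

lemma le_lAbs_polyLS (ht : 1 < t) {P : Polynomial F} (hP : P ≠ 0) :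
    t ^ (P.natDegree : ℤ) ≤ lAbs t (polyLS P) := by
  rw [lAbs_of_ne (polyLS_ne_zero hP)]
  exact zpow_le_zpow_right₀ ht.le (by linarith [polyLS_order_le hP])

lemma one_le_lAbs_polyLS (ht : 1 < t) {P : Polynomial F} (hP : P ≠ 0) :
    1 ≤ lAbs t (polyLS P) := by
  refine le_trans ?_ (le_lAbs_polyLS ht hP)
  simpa using zpow_le_zpow_right₀ ht.le (by positivity : (0:ℤ) ≤ (P.natDegree : ℤ))


lemma lAbs_sub_le (ht : 1 < t) (x y : LaurentSeries F) :
    lAbs t (x - y) ≤ max (lAbs t x) (lAbs t y) := by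
  rw [sub_eq_add_neg]
  simpa [lAbs_neg] using lAbs_add_le ht x (-y)

lemma polyLS_gap (ht : 1 < t) {P P' Q Q' : Polynomial F} (hQ : Q ≠ 0) (hQ' : Q' ≠ 0)
    (hne : polyLS P / polyLS Q ≠ polyLS P' / polyLS Q') :
    1 / (lAbs t (polyLS Q) * lAbs t (polyLS Q'))
      ≤ lAbs t (polyLS P / polyLS Q - polyLS P' / polyLS Q') := by
  have hQ0 := polyLS_ne_zero hQ
  have hQ'0 := polyLS_ne_zero hQ'
  rw [div_sub_div _ _ hQ0 hQ'0]
  have hnum : polyLS P * polyLS Q' - polyLS Q * polyLS P' = polyLS (P * Q' - Q * P') := by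
    unfold polyLS; rw [map_sub, map_mul, map_mul]
  have hN : (P * Q' - Q * P') ≠ 0 := by
    intro h
    apply hne
    have : polyLS P * polyLS Q' - polyLS Q * polyLS P' = 0 := by
      rw [hnum, h]; unfold polyLS; rw [map_zero]
    rw [div_eq_div_iff hQ0 hQ'0]
    linear_combination this
  rw [hnum, lAbs_div ht, lAbs_mul ht]
  have h1 : (1 : ℝ) ≤ lAbs t (polyLS (P * Q' - Q * P')) := one_le_lAbs_polyLS ht hN
  have hpos : 0 < lAbs t (polyLS Q) * lAbs t (polyLS Q') :=
    mul_pos (lAbs_pos ht hQ0) (lAbs_pos ht hQ'0)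
  exact div_le_div_of_nonneg_right h1 hpos.le

lemma finite_lAbs_le [Finite F] (ht : 1 < t) (B : ℝ) :
    {P : Polynomial F | lAbs t (polyLS P) ≤ B}.Finite := by
  obtain ⟨N, hN⟩ := pow_unbounded_of_one_lt B ht
  have hsub : {P : Polynomial F | lAbs t (polyLS P) ≤ B} ⊆
      (Polynomial.degreeLT F N : Set (Polynomial F)) := by
    intro P hP
    rw [SetLike.mem_coe, Polynomial.mem_degreeLT]
    rcases eq_or_ne P 0 with rfl | hP0
    · rw [Polynomial.degree_zero]; exact WithBot.bot_lt_coe _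
    · rw [← Polynomial.natDegree_lt_iff_degree_lt hP0]
      by_contra hcon
      push_neg at hcon
      have h1 : (t : ℝ) ^ (N : ℤ) ≤ t ^ (P.natDegree : ℤ) :=
        zpow_le_zpow_right₀ ht.le (by exact_mod_cast hcon)
      have h2 := le_lAbs_polyLS ht hP0 (t := t)
      have : (t : ℝ) ^ N ≤ B := by
        calc (t : ℝ) ^ N = t ^ (N : ℤ) := (zpow_natCast t N).symm
          _ ≤ t ^ (P.natDegree : ℤ) := h1
          _ ≤ lAbs t (polyLS P) := h2
          _ ≤ B := hP
      linarith
  haveI : Finite (Polynomial.degreeLT F N) :=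
    Finite.of_equiv _ (Polynomial.degreeLTEquiv F N).symm.toEquiv
  exact Set.Finite.subset (Polynomial.degreeLT F N : Set (Polynomial F)).toFinite hsub

end PolyLS

section Main
variable {F : Type*} [Field F] {t : ℝ}

/-- `t * lAbs x ≤ lAbs y` whenever `lAbs x < lAbs y` (values are powers of `t`). -/
lemma lAbs_t_mul_le (ht : 1 < t) {x y : LaurentSeries F} (hx : x ≠ 0) (hy : y ≠ 0)
    (h : lAbs t x < lAbs t y) : t * lAbs t x ≤ lAbs t y := by
  rw [lAbs_of_ne hx, lAbs_of_ne hy] at h ⊢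
  have hlt : -x.order < -y.order := by
    by_contra hc
    push_neg at hc
    exact absurd (zpow_le_zpow_right₀ ht.le hc) (not_le.mpr h)
  calc t * t ^ (-x.order) = t ^ (-x.order + 1) := by
        rw [zpow_add₀ (by linarith : t ≠ 0), zpow_one, mul_comm]
    _ ≤ t ^ (-y.order) := zpow_le_zpow_right₀ ht.le (by omega)

variable (f : LaurentSeries F)

lemma growth_pow_le (ht : 1 < t)
    {Q : ℕ → Polynomial F} (hQ : ∀ n ≥ 1, Q n ≠ 0)
    (hgrow : ∀ n ≥ 1, lAbs t (polyLS (Q n)) < lAbs t (polyLS (Q (n + 1)))) :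
    ∀ n : ℕ, t ^ n ≤ lAbs t (polyLS (Q (n + 1))) := by
  intro n
  induction n with
  | zero => simpa using one_le_lAbs_polyLS ht (hQ 1 le_rfl)
  | succ n ih =>
      have hstep := lAbs_t_mul_le ht (polyLS_ne_zero (hQ (n+1) (by omega)))
        (polyLS_ne_zero (hQ (n+2) (by omega))) (hgrow (n+1) (by omega))
      calc t ^ (n+1) = t * t ^ n := by ring
        _ ≤ t * lAbs t (polyLS (Q (n + 1))) :=
            mul_le_mul_of_nonneg_left ih (by linarith)
        _ ≤ lAbs t (polyLS (Q (n + 2))) := hstep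

lemma lower_aux [Finite F] (ht : 1 < t) (δ : ℝ) (hδ : 0 < δ)
    (c₂ : ℝ) (hc₂ : 0 < c₂)
    (P Q : ℕ → Polynomial F) (hQ : ∀ n ≥ 1, Q n ≠ 0)
    (hgrow : ∀ n ≥ 1, lAbs t (polyLS (Q n)) < lAbs t (polyLS (Q (n + 1))))
    (happrox : ∀ n ≥ 1,
      lAbs t (f - polyLS (P n) / polyLS (Q n)) ≤ c₂ / lAbs t (polyLS (Q n)) ^ (1 + δ))
    (τ : ℝ) (hτ : τ < 1 + δ) :
    {PQ : Polynomial F × Polynomial F | PQ.2 ≠ 0 ∧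
      lAbs t (f - polyLS PQ.1 / polyLS PQ.2) < (lAbs t (polyLS PQ.2)) ^ (-τ)}.Infinite := by
  set q : ℕ → ℝ := fun n => lAbs t (polyLS (Q n)) with hq
  have hqpos : ∀ n ≥ 1, 0 < q n := fun n hn => lAbs_pos ht (polyLS_ne_zero (hQ n hn))
  have hq1 : ∀ n ≥ 1, 1 ≤ q n := fun n hn => one_le_lAbs_polyLS ht (hQ n hn)
  set ε := 1 + δ - τ with hε
  have hεpos : 0 < ε := by simp [hε]; linarith
  have htε : 1 < t ^ ε := Real.one_lt_rpow_iff_of_pos (by linarith) |>.mpr (Or.inl ⟨ht, hεpos⟩)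
  obtain ⟨N, hN⟩ := pow_unbounded_of_one_lt c₂ htε
  -- for n ≥ N, c₂ < q (n+1) ^ ε
  have key : ∀ n : ℕ, N ≤ n → c₂ < q (n + 1) ^ ε := by
    intro n hn
    have h1 : (t ^ ε) ^ N ≤ (t ^ ε) ^ n := pow_le_pow_right₀ htε.le hn
    have h2 : (t ^ ε) ^ n = (t ^ n) ^ ε := by
      rw [← Real.rpow_natCast (t ^ ε) n, ← Real.rpow_natCast t n,
        ← Real.rpow_mul (by linarith), ← Real.rpow_mul (by linarith), mul_comm]
    have h3 : (t ^ n : ℝ) ^ ε ≤ q (n + 1) ^ ε :=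
      Real.rpow_le_rpow (by positivity) (growth_pow_le ht hQ hgrow n) hεpos.le
    calc c₂ < (t ^ ε) ^ N := hN
      _ ≤ (t ^ ε) ^ n := h1
      _ = (t ^ n) ^ ε := h2
      _ ≤ q (n + 1) ^ ε := h3
  have hmono : StrictMono fun n : ℕ => q (n + 1) :=
    strictMono_nat_of_lt_succ fun n => hgrow (n + 1) (by omega)
  apply Set.infinite_of_injective_forall_mem
    (f := fun n : ℕ => (P (n + N + 1), Q (n + N + 1)))
  · intro a b hab
    simp only [Prod.mk.injEq] at hab
    have : q (a + N + 1) = q (b + N + 1) := by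
      simp only [hq]
      rw [hab.2]
    have := hmono.injective (a₁ := a + N) (a₂ := b + N) this
    omega
  · intro n
    refine ⟨hQ _ (by omega), ?_⟩
    have hm : N ≤ n + N := by omega
    have hk := key (n + N) hm
    have happ := happrox (n + N + 1) (by omega)
    have hqp := hqpos (n + N + 1) (by omega)
    have hlt : c₂ / q (n + N + 1) ^ (1 + δ) < q (n + N + 1) ^ (-τ) := by
      rw [div_lt_iff₀ (by positivity), ← Real.rpow_add hqp]
      have : -τ + (1 + δ) = ε := by simp [hε]; ring
      rw [this]
      exact hk
    exact lt_of_le_of_lt happ hlt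

lemma unbounded_aux [Finite F] (ht : 1 < t) (τ : ℝ)
    (hinf : {PQ : Polynomial F × Polynomial F | PQ.2 ≠ 0 ∧
      lAbs t (f - polyLS PQ.1 / polyLS PQ.2) < (lAbs t (polyLS PQ.2)) ^ (-τ)}.Infinite)
    (B : ℝ) :
    ∃ PQ : Polynomial F × Polynomial F, (PQ.2 ≠ 0 ∧
      lAbs t (f - polyLS PQ.1 / polyLS PQ.2) < (lAbs t (polyLS PQ.2)) ^ (-τ)) ∧
      B < lAbs t (polyLS PQ.2) := by
  by_contra hcon
  push_neg at hcon
  set M : ℝ := max (lAbs t f) (B ^ |τ|) with hM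
  apply hinf
  have hsub : {PQ : Polynomial F × Polynomial F | PQ.2 ≠ 0 ∧
      lAbs t (f - polyLS PQ.1 / polyLS PQ.2) < (lAbs t (polyLS PQ.2)) ^ (-τ)} ⊆
      {R : Polynomial F | lAbs t (polyLS R) ≤ M * B} ×ˢ
      {R : Polynomial F | lAbs t (polyLS R) ≤ B} := by
    rintro ⟨Pp, Qq⟩ ⟨hQq, hlt⟩
    have hBmem : lAbs t (polyLS Qq) ≤ B := hcon _ ⟨hQq, hlt⟩
    have hq1 : (1:ℝ) ≤ lAbs t (polyLS Qq) := one_le_lAbs_polyLS ht hQq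
    have hBexp : (lAbs t (polyLS Qq)) ^ (-τ) ≤ B ^ |τ| := by
      calc (lAbs t (polyLS Qq)) ^ (-τ) ≤ (lAbs t (polyLS Qq)) ^ |τ| :=
            Real.rpow_le_rpow_of_exponent_le hq1 (neg_le_abs τ)
        _ ≤ B ^ |τ| := Real.rpow_le_rpow (by linarith) hBmem (abs_nonneg τ)
    have hPQle : lAbs t (polyLS Pp / polyLS Qq) ≤ M := by
      have : polyLS Pp / polyLS Qq = f - (f - polyLS Pp / polyLS Qq) := by ring
      rw [this]
      refine (lAbs_sub_le ht _ _).trans ?_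
      exact max_le_max le_rfl (hlt.le.trans hBexp)
    constructor
    · show lAbs t (polyLS Pp) ≤ M * B
      have hdiv : lAbs t (polyLS Pp) = lAbs t (polyLS Pp / polyLS Qq) * lAbs t (polyLS Qq) := by
        rw [lAbs_div ht]
        field_simp
      rw [hdiv]
      have hM0 : 0 ≤ M := le_max_of_le_left (lAbs_nonneg ht f)
      have h0 : 0 ≤ lAbs t (polyLS Pp / polyLS Qq) := lAbs_nonneg ht _
      exact mul_le_mul hPQle hBmem (by linarith) hM0
    · exact hBmem
  exact Set.Finite.subset ((finite_lAbs_le ht (M * B)).prod (finite_lAbs_le ht B)) hsub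

lemma upper_aux [Finite F] (ht : 1 < t) (δ ρ θ : ℝ) (hδ : 0 < δ) (hδρ : δ ≤ ρ) (hθ : 1 ≤ θ)
    (c₀ c₁ c₂ : ℝ) (hc₀ : 0 < c₀) (hc₁ : 0 < c₁) (hc₂ : 0 < c₂)
    (P Q : ℕ → Polynomial F) (hQ : ∀ n ≥ 1, Q n ≠ 0)
    (hgrow : ∀ n ≥ 1, lAbs t (polyLS (Q n)) < lAbs t (polyLS (Q (n + 1))) ∧
      lAbs t (polyLS (Q (n + 1))) ≤ c₀ * lAbs t (polyLS (Q n)) ^ θ)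
    (happrox : ∀ n ≥ 1,
      c₁ / lAbs t (polyLS (Q n)) ^ (1 + ρ) ≤ lAbs t (f - polyLS (P n) / polyLS (Q n)) ∧
      lAbs t (f - polyLS (P n) / polyLS (Q n)) ≤ c₂ / lAbs t (polyLS (Q n)) ^ (1 + δ))
    (τ : ℝ)
    (hinf : {PQ : Polynomial F × Polynomial F | PQ.2 ≠ 0 ∧
      lAbs t (f - polyLS PQ.1 / polyLS PQ.2) < (lAbs t (polyLS PQ.2)) ^ (-τ)}.Infinite) :
    τ ≤ θ * (1 + ρ) / δ := by
  classical
  set q : ℕ → ℝ := fun n => lAbs t (polyLS (Q n)) with hqdef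
  have hqpos : ∀ n ≥ 1, 0 < q n := fun n hn => lAbs_pos ht (polyLS_ne_zero (hQ n hn))
  have hq1 : ∀ n ≥ 1, 1 ≤ q n := fun n hn => one_le_lAbs_polyLS ht (hQ n hn)
  set σ : ℝ := θ * (1 + ρ) / δ with hσ
  by_contra hcon
  push_neg at hcon
  have hτσ : 0 < τ - σ := by linarith
  have hθδ : (0:ℝ) < θ / δ := by positivity
  set a : ℝ := c₀ * c₂ ^ (θ / δ) with ha
  have ha0 : (0:ℝ) < a := mul_pos hc₀ (Real.rpow_pos_of_pos hc₂ _)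
  set C : ℝ := max a (c₁⁻¹ * a ^ (1 + ρ)) with hC
  have hC0 : (0:ℝ) < C := lt_max_of_lt_left ha0
  set B₀ : ℝ := max 1 (q 1 ^ δ / c₂) with hB₀
  obtain ⟨⟨P₀, Q₀⟩, ⟨hQ₀, hx⟩, hxB⟩ :=
    unbounded_aux f ht τ hinf (max B₀ (C ^ (τ - σ)⁻¹))
  simp only at hQ₀ hx hxB
  set x : ℝ := lAbs t (polyLS Q₀) with hxdef
  have hx1 : 1 < x := lt_of_le_of_lt (le_trans (le_max_left _ _) (le_max_left _ _)) hxB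
  have hxpos : (0:ℝ) < x := by linarith
  -- main claim
  have claim : x ^ τ ≤ C * x ^ σ := by
    have hex : ∃ k : ℕ, c₂ * x < q (k + 1) ^ δ := by
      have htδ : 1 < t ^ δ := Real.one_lt_rpow_iff_of_pos (by linarith) |>.mpr
        (Or.inl ⟨ht, hδ⟩)
      obtain ⟨N, hN⟩ := pow_unbounded_of_one_lt (c₂ * x) htδ
      refine ⟨N, ?_⟩
      have h2 : (t ^ δ) ^ N = ((t:ℝ) ^ N) ^ δ := by
        rw [← Real.rpow_natCast (t ^ δ) N, ← Real.rpow_natCast t N,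
          ← Real.rpow_mul (by linarith), ← Real.rpow_mul (by linarith), mul_comm]
      have h3 : ((t:ℝ) ^ N) ^ δ ≤ q (N + 1) ^ δ :=
        Real.rpow_le_rpow (by positivity)
          (growth_pow_le ht hQ (fun n hn => (hgrow n hn).1) N) hδ.le
      calc c₂ * x < (t ^ δ) ^ N := hN
        _ = ((t:ℝ) ^ N) ^ δ := h2
        _ ≤ q (N + 1) ^ δ := h3
    set k := Nat.find hex with hkdef
    have hk : c₂ * x < q (k + 1) ^ δ := Nat.find_spec hex
    have hk1 : 1 ≤ k := by
      by_contra hk0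
      have hk0' : k = 0 := by omega
      rw [hk0'] at hk
      have h1 : x < q 1 ^ δ / c₂ := by
        rw [lt_div_iff₀ hc₂]
        linarith [hk]
      have h2 : q 1 ^ δ / c₂ ≤ B₀ := le_max_right _ _
      have h3 : B₀ ≤ max B₀ (C ^ (τ - σ)⁻¹) := le_max_left _ _
      linarith [hxB]
    have hqk : q k ^ δ ≤ c₂ * x := by
      have hmin := Nat.find_min hex (show k - 1 < k by omega)
      push_neg at hmin
      rwa [show k - 1 + 1 = k by omega] at hmin
    have hqkpos : 0 < q k := hqpos k hk1
    have hqmpos : 0 < q (k + 1) := hqpos (k + 1) (by omega)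
    -- q (k+1) ≤ a * x ^ (θ/δ)
    have hqm : q (k + 1) ≤ a * x ^ (θ / δ) := by
      have hqkx : q k ≤ (c₂ * x) ^ δ⁻¹ := by
        calc q k = (q k ^ δ) ^ δ⁻¹ := by
              rw [← Real.rpow_mul hqkpos.le, mul_inv_cancel₀ hδ.ne', Real.rpow_one]
          _ ≤ (c₂ * x) ^ δ⁻¹ := Real.rpow_le_rpow (by positivity) hqk (by positivity)
      have h2 : q k ^ θ ≤ ((c₂ * x) ^ δ⁻¹) ^ θ :=
        Real.rpow_le_rpow hqkpos.le hqkx (by linarith)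
      have h3 : ((c₂ * x) ^ δ⁻¹) ^ θ = c₂ ^ (θ / δ) * x ^ (θ / δ) := by
        rw [← Real.rpow_mul (by positivity), show δ⁻¹ * θ = θ / δ by
          rw [div_eq_mul_inv]; ring, Real.mul_rpow hc₂.le hxpos.le]
      calc q (k + 1) ≤ c₀ * q k ^ θ := (hgrow k hk1).2
        _ ≤ c₀ * (c₂ ^ (θ / δ) * x ^ (θ / δ)) :=
            mul_le_mul_of_nonneg_left (h2.trans_eq h3) hc₀.le
        _ = a * x ^ (θ / δ) := by rw [ha]; ring
    have happm := happrox (k + 1) (by omega)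
    set E : ℝ := lAbs t (f - polyLS (P (k + 1)) / polyLS (Q (k + 1))) with hE
    have hEupper : E < 1 / (x * q (k + 1)) := by
      refine lt_of_le_of_lt happm.2 ?_
      rw [div_lt_div_iff₀ (by positivity) (by positivity)]
      have hsplit : q (k + 1) ^ (1 + δ) = q (k + 1) * q (k + 1) ^ δ := by
        rw [Real.rpow_add hqmpos, Real.rpow_one]
      nlinarith [hk, hqmpos, hsplit]
    -- exponent comparison facts
    have hexp1 : 1 + θ / δ ≤ σ := by
      rw [hσ, le_div_iff₀ hδ]
      have h1 : (1 + θ / δ) * δ = δ + θ := by field_simp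
      rw [h1]
      nlinarith
    have hexpσ : θ / δ * (1 + ρ) = σ := by rw [hσ]; ring
    by_cases hcase : polyLS P₀ / polyLS Q₀ = polyLS (P (k + 1)) / polyLS (Q (k + 1))
    · -- case B : same rational approximation
      have hElow : c₁ / q (k + 1) ^ (1 + ρ) ≤ lAbs t (f - polyLS P₀ / polyLS Q₀) := by
        rw [hcase]; exact happm.1
      have h4 : c₁ / q (k + 1) ^ (1 + ρ) < x ^ (-τ) := lt_of_le_of_lt hElow hx
      rw [Real.rpow_neg hxpos.le] at h4
      have hxτpos : 0 < x ^ τ := Real.rpow_pos_of_pos hxpos τ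
      have hApos : 0 < q (k + 1) ^ (1 + ρ) := Real.rpow_pos_of_pos hqmpos _
      have h5' : x ^ τ * c₁ < q (k + 1) ^ (1 + ρ) := by
        have h6' := mul_lt_mul_of_pos_left ((div_lt_iff₀ hApos).mp h4) hxτpos
        rwa [← mul_assoc, mul_inv_cancel₀ hxτpos.ne', one_mul] at h6'
      have h5 : x ^ τ ≤ c₁⁻¹ * q (k + 1) ^ (1 + ρ) := by
        rw [inv_mul_eq_div]
        exact ((lt_div_iff₀ hc₁).mpr h5').le
      have h6 : q (k + 1) ^ (1 + ρ) ≤ a ^ (1 + ρ) * x ^ σ := by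
        calc q (k + 1) ^ (1 + ρ) ≤ (a * x ^ (θ / δ)) ^ (1 + ρ) :=
              Real.rpow_le_rpow hqmpos.le hqm (by linarith)
          _ = a ^ (1 + ρ) * x ^ σ := by
              rw [Real.mul_rpow ha0.le (by positivity), ← Real.rpow_mul hxpos.le, hexpσ]
      calc x ^ τ ≤ c₁⁻¹ * q (k + 1) ^ (1 + ρ) := h5
        _ ≤ c₁⁻¹ * (a ^ (1 + ρ) * x ^ σ) :=
            mul_le_mul_of_nonneg_left h6 (by positivity)
        _ = (c₁⁻¹ * a ^ (1 + ρ)) * x ^ σ := by ring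
        _ ≤ C * x ^ σ := mul_le_mul_of_nonneg_right (le_max_right _ _)
            (Real.rpow_nonneg hxpos.le _)
    · -- case A : different rational approximations
      have hgap := polyLS_gap ht hQ₀ (hQ (k + 1) (by omega)) hcase
      have htri : lAbs t (polyLS P₀ / polyLS Q₀ - polyLS (P (k + 1)) / polyLS (Q (k + 1)))
          ≤ max E (lAbs t (f - polyLS P₀ / polyLS Q₀)) := by
        have hdiff : polyLS P₀ / polyLS Q₀ - polyLS (P (k + 1)) / polyLS (Q (k + 1))
            = (f - polyLS (P (k + 1)) / polyLS (Q (k + 1))) - (f - polyLS P₀ / polyLS Q₀) := by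
          ring
        rw [hdiff]
        exact lAbs_sub_le ht _ _
      have hcomb : 1 / (x * q (k + 1)) ≤ max E (lAbs t (f - polyLS P₀ / polyLS Q₀)) :=
        le_trans hgap htri
      have hE0 : 1 / (x * q (k + 1)) ≤ lAbs t (f - polyLS P₀ / polyLS Q₀) := by
        rcases le_max_iff.mp hcomb with h | h
        · linarith [hEupper]
        · exact h
      have h4 : 1 / (x * q (k + 1)) < x ^ (-τ) := lt_of_le_of_lt hE0 hx
      rw [Real.rpow_neg hxpos.le, ← one_div] at h4
      have hxτpos : 0 < x ^ τ := Real.rpow_pos_of_pos hxpos τ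
      have h5 : x ^ τ < x * q (k + 1) := by
        have h6' := (div_lt_div_iff₀ (by positivity : (0:ℝ) < x * q (k + 1)) hxτpos).mp h4
        simpa using h6'
      calc x ^ τ ≤ x * q (k + 1) := h5.le
        _ ≤ x * (a * x ^ (θ / δ)) := mul_le_mul_of_nonneg_left hqm hxpos.le
        _ = a * x ^ (1 + θ / δ) := by
            rw [Real.rpow_add hxpos, Real.rpow_one]; ring
        _ ≤ a * x ^ σ := mul_le_mul_of_nonneg_left
            (Real.rpow_le_rpow_of_exponent_le hx1.le hexp1) ha0.le
        _ ≤ C * x ^ σ := mul_le_mul_of_nonneg_right (le_max_left _ _)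
            (Real.rpow_nonneg hxpos.le _)
  -- derive contradiction
  have h1 : C < x ^ (τ - σ) := by
    have h2 : C ^ (τ - σ)⁻¹ < x := lt_of_le_of_lt (le_max_right _ _) hxB
    calc C = (C ^ (τ - σ)⁻¹) ^ (τ - σ) := by
          rw [← Real.rpow_mul hC0.le, inv_mul_cancel₀ hτσ.ne', Real.rpow_one]
      _ < x ^ (τ - σ) := Real.rpow_lt_rpow (Real.rpow_nonneg hC0.le _) h2 hτσ
  have h2 : x ^ τ = x ^ (τ - σ) * x ^ σ := by
    rw [← Real.rpow_add hxpos]; ring_nf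
  have h3 : x ^ τ < x ^ τ := by
    calc x ^ τ ≤ C * x ^ σ := claim
      _ < x ^ (τ - σ) * x ^ σ :=
          mul_lt_mul_of_pos_right h1 (Real.rpow_pos_of_pos hxpos σ)
      _ = x ^ τ := h2.symm
  exact absurd h3 (lt_irrefl _)

end Main

/-- The irrationality exponent `μ(f)`: the supremum of the real numbers `τ` for which
`|f - P/Q| < |Q|^{-τ}` has infinitely many solutions `(P, Q) ∈ F_q[T]²`, `Q ≠ 0`. -/
noncomputable def irrExp {F : Type*} [Field F] (t : ℝ) (f : LaurentSeries F) : ℝ :=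
  sSup {τ : ℝ | {PQ : Polynomial F × Polynomial F | PQ.2 ≠ 0 ∧
    lAbs t (f - polyLS PQ.1 / polyLS PQ.2) < (lAbs t (polyLS PQ.2)) ^ (-τ)}.Infinite}

/-- The approximation lemma: a sequence of rational approximations with controlled
growth of the denominators and controlled quality of approximation pins down the
irrationality exponent: `1 + δ ≤ μ(f) ≤ θ(1+ρ)/δ`. -/
theorem approximation_lemma
    (p e q : ℕ) (hp : p.Prime) (he : 1 ≤ e) (hq : q = p ^ e)
    (F : Type*) [Field F] [Fintype F] (hcard : Fintype.card F = q)
    (t : ℝ) (ht : 1 < t)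
    (f : LaurentSeries F) (δ ρ θ : ℝ) (hδ : 0 < δ) (hδρ : δ ≤ ρ) (hθ : 1 ≤ θ)
    (c₀ c₁ c₂ : ℝ) (hc₀ : 0 < c₀) (hc₁ : 0 < c₁) (hc₂ : 0 < c₂)
    (P Q : ℕ → Polynomial F) (hQ : ∀ n ≥ 1, Q n ≠ 0)
    (hgrow : ∀ n ≥ 1, lAbs t (polyLS (Q n)) < lAbs t (polyLS (Q (n + 1))) ∧
      lAbs t (polyLS (Q (n + 1))) ≤ c₀ * lAbs t (polyLS (Q n)) ^ θ)
    (happrox : ∀ n ≥ 1,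
      c₁ / lAbs t (polyLS (Q n)) ^ (1 + ρ) ≤ lAbs t (f - polyLS (P n) / polyLS (Q n)) ∧
      lAbs t (f - polyLS (P n) / polyLS (Q n)) ≤ c₂ / lAbs t (polyLS (Q n)) ^ (1 + δ)) :
    1 + δ ≤ irrExp t f ∧ irrExp t f ≤ θ * (1 + ρ) / δ := by
  set S : Set ℝ := {τ : ℝ | {PQ : Polynomial F × Polynomial F | PQ.2 ≠ 0 ∧
    lAbs t (f - polyLS PQ.1 / polyLS PQ.2) < (lAbs t (polyLS PQ.2)) ^ (-τ)}.Infinite} with hSdef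
  have hirr : irrExp t f = sSup S := rfl
  have hupper : ∀ τ ∈ S, τ ≤ θ * (1 + ρ) / δ := fun τ hτ =>
    upper_aux f ht δ ρ θ hδ hδρ hθ c₀ c₁ c₂ hc₀ hc₁ hc₂ P Q hQ hgrow happrox τ hτ
  have hlower : ∀ τ, τ < 1 + δ → τ ∈ S := fun τ hτ =>
    lower_aux f ht δ hδ c₂ hc₂ P Q hQ (fun n hn => (hgrow n hn).1)
      (fun n hn => (happrox n hn).2) τ hτ
  have hbdd : BddAbove S := ⟨θ * (1 + ρ) / δ, fun τ hτ => hupper τ hτ⟩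
  have hne : S.Nonempty := ⟨0, hlower 0 (by linarith)⟩
  constructor
  · rw [hirr]
    refine le_of_forall_lt fun c hc => ?_
    have hmem : (c + (1 + δ)) / 2 ∈ S := hlower _ (by linarith)
    have := le_csSup hbdd hmem
    linarith
  · rw [hirr]
    exact csSup_le hne hupper
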